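/- (Sauer–Shelah) Let (X,R) be a set system of VC dimension at most d. Then for every finite subset Y ⊆ X with Card(Y) = n, the number of distinct traces Card{Y ∩ R : R ∈ R} is at most Σ_{i=0}^{d} C(n,i), which for n ≥ d ≥ 1 is at most n^d + 1 (in particular O(n^d)). -/
import Mathlib

/-- `Y` is shattered by the family `R`: every subset of `Y` is a trace `Y ∩ r`. -/
def ShattersFam {X : Type*} (R : Set (Set X)) (Y : Set X) : Prop :=
  ∀ Z ⊆ Y, ∃ r ∈ R, Y ∩ r = Z

private lemma sum_choose_le_pow (n d : ℕ) (hd : 1 ≤ d) (hdn : d ≤ n) :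
    ∑ i ∈ Finset.range (d + 1), Nat.choose n i ≤ n ^ d + 1 := by
  induction d, hd using Nat.le_induction with
  | base =>
    simp only [Finset.sum_range_succ, Finset.sum_range_one, Nat.choose_zero_right,
      Nat.choose_one_right, pow_one, Finset.sum_range_zero]
    omega
  | succ d hd ih =>
    have h1 : n.choose (d + 1) ≤ n ^ d * (n - 1) := by
      calc n.choose (d + 1) ≤ n.choose (d + 1) * (d + 1) :=
            Nat.le_mul_of_pos_right _ (by omega)
        _ = n.choose d * (n - d) := Nat.choose_succ_right_eq n d
        _ ≤ n ^ d * (n - 1) := Nat.mul_le_mul (Nat.choose_le_pow n d) (by omega)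
    have key : n ^ d + n ^ d * (n - 1) = n ^ (d + 1) := by
      obtain ⟨k, rfl⟩ : ∃ k, n = k + 1 := ⟨n - 1, by omega⟩
      rw [pow_succ]
      simp only [Nat.add_sub_cancel]
      ring
    rw [Finset.sum_range_succ]
    have := ih (by omega)
    omega

theorem stmt6 {X : Type*} (R : Set (Set X)) (d : ℕ)
    (hVC : ∀ Y : Finset X, ShattersFam R (↑Y : Set X) → Y.card ≤ d)
    (Y : Finset X) (n : ℕ) (hn : Y.card = n) :
    {Z : Set X | ∃ r ∈ R, (↑Y : Set X) ∩ r = Z}.ncard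
        ≤ ∑ i ∈ Finset.range (d + 1), Nat.choose n i ∧
      (1 ≤ d → d ≤ n →
        ∑ i ∈ Finset.range (d + 1), Nat.choose n i ≤ n ^ d + 1) := by
  classical
  refine ⟨?_, fun h1 h2 => sum_choose_le_pow n d h1 h2⟩
  subst hn
  set T : Set (Set X) := {Z : Set X | ∃ r ∈ R, (↑Y : Set X) ∩ r = Z} with hT
  set G : Finset {x // x ∈ Y} → Set X :=
    fun t => ↑(t.map (Function.Embedding.subtype _)) with hG
  set 𝒜 : Finset (Finset {x // x ∈ Y}) := Finset.univ.filter (fun t => G t ∈ T) with h𝒜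
  -- membership in G t
  have hmemG : ∀ (t : Finset {x // x ∈ Y}) (x : X),
      x ∈ G t ↔ ∃ hx : x ∈ Y, (⟨x, hx⟩ : {x // x ∈ Y}) ∈ t := by
    intro t x
    simp only [hG, Finset.coe_map, Set.mem_image, Finset.mem_coe,
      Function.Embedding.coe_subtype]
    constructor
    · rintro ⟨⟨y, hy⟩, hyt, rfl⟩; exact ⟨hy, hyt⟩
    · rintro ⟨hx, hxt⟩; exact ⟨⟨x, hx⟩, hxt, rfl⟩
  -- Step A : T ⊆ G '' 𝒜
  have hsub : T ⊆ G '' ↑𝒜 := by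
    rintro Z ⟨r, hr, hZ⟩
    set t : Finset {x // x ∈ Y} := Finset.univ.filter (fun y => (y : X) ∈ Z) with ht
    have hZY : Z ⊆ ↑Y := by rw [← hZ]; exact Set.inter_subset_left
    have hGt : G t = Z := by
      ext x
      rw [hmemG]
      constructor
      · rintro ⟨hx, hxt⟩
        simpa [ht] using hxt
      · intro hxZ
        exact ⟨hZY hxZ, by simp [ht, hxZ]⟩
    refine ⟨t, ?_, hGt⟩
    simp only [h𝒜, Finset.coe_filter, Set.mem_setOf_eq, Finset.mem_univ, true_and]
    rw [hGt]
    exact ⟨r, hr, hZ⟩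
  have hA : T.ncard ≤ 𝒜.card := by
    calc T.ncard ≤ (G '' ↑𝒜).ncard :=
          Set.ncard_le_ncard hsub (𝒜.finite_toSet.image _)
      _ ≤ (↑𝒜 : Set (Finset {x // x ∈ Y})).ncard := Set.ncard_image_le 𝒜.finite_toSet
      _ = 𝒜.card := Set.ncard_coe_finset 𝒜
  -- Step D : vcDim 𝒜 ≤ d
  have hvc : 𝒜.vcDim ≤ d := by
    refine Finset.sup_le fun s hs => ?_
    have hsh : 𝒜.Shatters s := Finset.mem_shatterer.1 hs
    set s' : Finset X := s.map (Function.Embedding.subtype _) with hs'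
    have hcard : s.card = s'.card := (Finset.card_map _).symm
    rw [hcard]
    refine hVC s' ?_
    intro Z hZ
    set t : Finset {x // x ∈ Y} := Finset.univ.filter (fun y => (y : X) ∈ Z) with ht
    have hts : t ⊆ s := by
      intro y hy
      have hyZ : (y : X) ∈ Z := by simpa [ht] using hy
      have : (y : X) ∈ (↑s' : Set X) := hZ hyZ
      simp only [hs', Finset.coe_map, Set.mem_image, Finset.mem_coe,
        Function.Embedding.coe_subtype] at this
      obtain ⟨y', hy', hyy⟩ := this
      rwa [← Subtype.ext hyy.symm] at hy'
    obtain ⟨u, hu, hsu⟩ := hsh hts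
    have huT : G u ∈ T := by
      have := Finset.mem_filter.1 hu
      exact this.2
    obtain ⟨r, hrR, hru⟩ := huT
    refine ⟨r, hrR, ?_⟩
    ext x
    constructor
    · rintro ⟨hxs', hxr⟩
      simp only [hs', Finset.coe_map, Set.mem_image, Finset.mem_coe,
        Function.Embedding.coe_subtype] at hxs'
      obtain ⟨⟨x', hx'⟩, hx's, rfl⟩ := hxs'
      have hxGu : (x' : X) ∈ G u := by
        rw [← hru]; exact ⟨hx', hxr⟩
      rw [hmemG] at hxGu
      obtain ⟨hx2, hxu⟩ := hxGu
      have hxt : (⟨x', hx'⟩ : {x // x ∈ Y}) ∈ t := by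
        rw [← hsu]; exact Finset.mem_inter.2 ⟨hx's, hxu⟩
      simpa [ht] using hxt
    · intro hxZ
      have hxs' : x ∈ (↑s' : Set X) := hZ hxZ
      simp only [hs', Finset.coe_map, Set.mem_image, Finset.mem_coe,
        Function.Embedding.coe_subtype] at hxs'
      obtain ⟨⟨x', hx'⟩, hx's, rfl⟩ := hxs'
      have hxt : (⟨x', hx'⟩ : {x // x ∈ Y}) ∈ t := by simp [ht, hxZ]
      have hxu : (⟨x', hx'⟩ : {x // x ∈ Y}) ∈ u := (Finset.mem_inter.1 (hsu ▸ hxt)).2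
      have : (x' : X) ∈ G u := (hmemG u x').2 ⟨hx', hxu⟩
      rw [← hru] at this
      refine ⟨?_, this.2⟩
      simp only [hs', Finset.coe_map, Set.mem_image, Finset.mem_coe,
        Function.Embedding.coe_subtype]
      exact ⟨⟨x', hx'⟩, hx's, rfl⟩
  -- Step B+C : Sauer-Shelah from mathlib
  have hB : 𝒜.card ≤ ∑ k ∈ Finset.Iic 𝒜.vcDim, (Y.card).choose k := by
    have := Finset.card_shatterer_le_sum_vcDim (𝒜 := 𝒜)
    rw [Fintype.card_coe] at this
    exact le_trans (Finset.card_le_card_shatterer 𝒜) this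
  have hC : ∑ k ∈ Finset.Iic 𝒜.vcDim, (Y.card).choose k
      ≤ ∑ k ∈ Finset.range (d + 1), (Y.card).choose k := by
    have hIr : Finset.Iic d = Finset.range (d + 1) := by
      ext x; simp [Nat.lt_succ_iff]
    rw [← hIr]
    exact Finset.sum_le_sum_of_subset (Finset.Iic_subset_Iic.2 hvc)
  exact le_trans hA (le_trans hB hC)
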